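/- Let N_c ≥ 1 and 0 ≤ N_e ≤ N_c be natural numbers and p ∈ {0, …, N_c−1}. Let S_0, …, S_{N_c−1} : Ω → ℂ be independent complex random variables with E[S_k] = 0 and E[|S_k|²] = ρ for all k, let d_0, …, d_{N_c−1} ∈ ℂ satisfy |d_k| = 1, and let α ∈ ℂ. Define I_c = (α / N_c) Σ_{i=N_e}^{N_c−1} Σ_{k=0, k≠p}^{N_c−1} S_k d_k exp( 2πi (k − p) i / N_c ). Then E[|I_c|²] = (N_e / N_c)(1 − N_e / N_c) |α|² ρ. -/

import Mathlib

open MeasureTheory ProbabilityTheory Finset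

lemma char_sum (Nc : ℕ) (hNc : 1 ≤ Nc) (m : ℤ) (hm : ¬ (Nc : ℤ) ∣ m) (c : ℂ) :
    ∑ k : Fin Nc, Complex.exp (2 * Real.pi * Complex.I * (k : ℕ) * m / Nc + c) = 0 := by
  have hNc0 : (Nc : ℂ) ≠ 0 := Nat.cast_ne_zero.mpr (by omega)
  set ζ : ℂ := Complex.exp (2 * Real.pi * Complex.I * m / Nc) with hζ
  have hpow : ∀ k : ℕ, Complex.exp (2 * Real.pi * Complex.I * k * m / Nc) = ζ ^ k := by
    intro k
    rw [hζ, ← Complex.exp_nat_mul]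
    ring_nf
  have hζ1 : ζ ≠ 1 := by
    rw [hζ, Ne, Complex.exp_eq_one_iff]
    rintro ⟨n, hn⟩
    apply hm
    have h2 : (2 : ℂ) * Real.pi * Complex.I ≠ 0 := by
      simp [Real.pi_ne_zero, Complex.I_ne_zero]
    field_simp at hn
    have : (m : ℂ) = (Nc : ℂ) * n := by
      apply mul_left_cancel₀ h2
      linear_combination (2 * Real.pi * Complex.I) * hn
    exact ⟨n, by exact_mod_cast this⟩
  have hζNc : ζ ^ Nc = 1 := by
    rw [hζ, ← Complex.exp_nat_mul]
    have : (Nc : ℂ) * (2 * Real.pi * Complex.I * m / Nc) = m * (2 * Real.pi * Complex.I) := by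
      field_simp
    rw [this, Complex.exp_int_mul_two_pi_mul_I]
  have : ∑ k : Fin Nc, Complex.exp (2 * Real.pi * Complex.I * (k : ℕ) * m / Nc + c)
      = (∑ k ∈ Finset.range Nc, ζ ^ k) * Complex.exp c := by
    rw [Finset.sum_mul, Finset.sum_range fun k => ζ ^ k * Complex.exp c]
    exact Finset.sum_congr rfl fun k _ => by rw [Complex.exp_add, hpow]
  rw [this, geom_sum_eq hζ1, hζNc]
  simp

lemma kernel_sum (Nc : ℕ) (hNc : 1 ≤ Nc) (p : Fin Nc) (i j : ℕ) (hi : i < Nc) (hj : j < Nc) :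
    ∑ k : Fin Nc, Complex.exp (2 * Real.pi * Complex.I * (((k : ℕ) : ℂ) - (((p : ℕ) : ℂ))) * (i : ℂ) / Nc) *
      (starRingEnd ℂ) (Complex.exp (2 * Real.pi * Complex.I * (((k : ℕ) : ℂ) - (((p : ℕ) : ℂ))) * (j : ℂ) / Nc))
    = if i = j then (Nc : ℂ) else 0 := by
  by_cases h : i = j
  · subst h
    rw [if_pos rfl]
    have : ∀ k : Fin Nc, Complex.exp (2 * Real.pi * Complex.I * (((k : ℕ) : ℂ) - (((p : ℕ) : ℂ))) * (i : ℂ) / Nc) *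
      (starRingEnd ℂ) (Complex.exp (2 * Real.pi * Complex.I * (((k : ℕ) : ℂ) - (((p : ℕ) : ℂ))) * (i : ℂ) / Nc)) = 1 := by
      intro k
      rw [← Complex.exp_conj, ← Complex.exp_add]
      have hc : (starRingEnd ℂ) (2 * Real.pi * Complex.I * (((k : ℕ) : ℂ) - (((p : ℕ) : ℂ))) * (i : ℂ) / Nc)
          = -(2 * Real.pi * Complex.I * (((k : ℕ) : ℂ) - (((p : ℕ) : ℂ))) * (i : ℂ) / Nc) := by
        simp [map_div₀, map_mul, map_sub, Complex.conj_I, map_ofNat]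
        ring
      rw [hc, add_neg_cancel, Complex.exp_zero]
    rw [Finset.sum_congr rfl fun k _ => this k]
    simp
  · rw [if_neg h]
    have hm : ¬ (Nc : ℤ) ∣ ((i : ℤ) - (j : ℤ)) := by
      intro hdvd
      have habs : |(i : ℤ) - (j : ℤ)| < (Nc : ℤ) := abs_lt.mpr ⟨by omega, by omega⟩
      have := Int.eq_zero_of_abs_lt_dvd hdvd habs
      omega
    rw [← char_sum Nc hNc ((i : ℤ) - (j : ℤ)) hm
      (-(2 * Real.pi * Complex.I * ((p : ℕ) : ℂ) * (((i : ℕ) : ℂ) - ((j : ℕ) : ℂ)) / Nc))]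
    refine Finset.sum_congr rfl fun k _ => ?_
    rw [← Complex.exp_conj, ← Complex.exp_add]
    congr 1
    have hc : (starRingEnd ℂ) (2 * Real.pi * Complex.I * (((k : ℕ) : ℂ) - (((p : ℕ) : ℂ))) * (j : ℂ) / Nc)
        = -(2 * Real.pi * Complex.I * (((k : ℕ) : ℂ) - (((p : ℕ) : ℂ))) * (j : ℂ) / Nc) := by
      simp [map_div₀, map_mul, map_sub, Complex.conj_I, map_ofNat]
      ring
    rw [hc]
    push_cast
    ring
lemma parseval (Nc Ne : ℕ) (hNc : 1 ≤ Nc) (hNe : Ne ≤ Nc) (p : Fin Nc) :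
    ∑ k ∈ Finset.univ.erase p, (‖∑ i ∈ Finset.Ico Ne Nc,
      Complex.exp (2 * Real.pi * Complex.I * (((k : ℕ) : ℂ) - (((p : ℕ) : ℂ))) * (i : ℂ) / Nc)‖) ^ 2
    = Ne * ((Nc : ℝ) - Ne) := by
  set E : Fin Nc → ℕ → ℂ := fun k i =>
    Complex.exp (2 * Real.pi * Complex.I * (((k : ℕ) : ℂ) - (((p : ℕ) : ℂ))) * (i : ℂ) / Nc) with hE
  set c : Fin Nc → ℂ := fun k => ∑ i ∈ Finset.Ico Ne Nc, E k i with hc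
  have key : ∀ k, (((‖c k‖) ^ 2 : ℝ) : ℂ) = c k * (starRingEnd ℂ) (c k) := by
    intro k
    rw [Complex.mul_conj, Complex.normSq_eq_norm_sq]
  -- expand each |c k|²
  have expand : ∀ k : Fin Nc, c k * (starRingEnd ℂ) (c k)
      = ∑ i ∈ Finset.Ico Ne Nc, ∑ j ∈ Finset.Ico Ne Nc, E k i * (starRingEnd ℂ) (E k j) := by
    intro k
    rw [hc, map_sum, Finset.sum_mul_sum]
  -- total sum over all k
  have total : ∑ k : Fin Nc, c k * (starRingEnd ℂ) (c k) = ((Nc - Ne : ℕ) : ℂ) * Nc := by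
    rw [Finset.sum_congr rfl fun k _ => expand k, Finset.sum_comm,
      Finset.sum_congr rfl fun i _ => Finset.sum_comm]
    have inner : ∀ i ∈ Finset.Ico Ne Nc, (∑ j ∈ Finset.Ico Ne Nc, ∑ k : Fin Nc,
        E k i * (starRingEnd ℂ) (E k j)) = (Nc : ℂ) := by
      intro i hi
      rw [Finset.mem_Ico] at hi
      have : ∀ j ∈ Finset.Ico Ne Nc, (∑ k : Fin Nc, E k i * (starRingEnd ℂ) (E k j))
          = if i = j then (Nc : ℂ) else 0 := by
        intro j hj
        rw [Finset.mem_Ico] at hj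
        exact kernel_sum Nc hNc p i j hi.2 hj.2
      rw [Finset.sum_congr rfl this, Finset.sum_ite_eq, if_pos (Finset.mem_Ico.mpr hi)]
    rw [show (∑ i ∈ Finset.Ico Ne Nc, ∑ j ∈ Finset.Ico Ne Nc, ∑ k : Fin Nc,
        E k i * (starRingEnd ℂ) (E k j)) = ∑ i ∈ Finset.Ico Ne Nc, (Nc : ℂ) from
      Finset.sum_congr rfl inner]
    rw [Finset.sum_const, Nat.card_Ico]
    simp [mul_comm]
  -- value at p
  have atp : c p = ((Nc - Ne : ℕ) : ℂ) := by
    show (∑ i ∈ Finset.Ico Ne Nc, E p i) = _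
    have : ∀ i ∈ Finset.Ico Ne Nc, E p i = 1 := by
      intro i _
      rw [hE]
      simp
    rw [Finset.sum_congr rfl this, Finset.sum_const, Nat.card_Ico]
    simp
  -- assemble
  have complexeq : ((∑ k ∈ Finset.univ.erase p, (‖c k‖) ^ 2 : ℝ) : ℂ)
      = (((Ne : ℝ) * ((Nc : ℝ) - Ne) : ℝ) : ℂ) := by
    rw [show ((∑ k ∈ Finset.univ.erase p, (‖c k‖) ^ 2 : ℝ) : ℂ)
        = ∑ k ∈ Finset.univ.erase p, (((‖c k‖) ^ 2 : ℝ) : ℂ) from by push_cast; rfl]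
    rw [Finset.sum_congr rfl fun k _ => key k, Finset.sum_erase_eq_sub (Finset.mem_univ p),
      total, atp, Complex.conj_natCast]
    push_cast [Nat.cast_sub hNe]
    ring
  exact Complex.ofReal_injective complexeq
lemma indep_integral_mul {Ω : Type*} [MeasurableSpace Ω] {P : Measure Ω}
    {f g : Ω → ℂ} (h : IndepFun f g P) (hf : Integrable f P) (hg : Integrable g P) :
    ∫ ω, f ω * g ω ∂P = (∫ ω, f ω ∂P) * ∫ ω, g ω ∂P := by
  have hfr : Integrable (fun ω => (f ω).re) P := hf.re
  have hfi : Integrable (fun ω => (f ω).im) P := hf.im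
  have hgr : Integrable (fun ω => (g ω).re) P := hg.re
  have hgi : Integrable (fun ω => (g ω).im) P := hg.im
  have hirr : IndepFun (fun ω => (f ω).re) (fun ω => (g ω).re) P :=
    h.comp Complex.measurable_re Complex.measurable_re
  have hiri : IndepFun (fun ω => (f ω).re) (fun ω => (g ω).im) P :=
    h.comp Complex.measurable_re Complex.measurable_im
  have hiir : IndepFun (fun ω => (f ω).im) (fun ω => (g ω).re) P :=
    h.comp Complex.measurable_im Complex.measurable_re
  have hiii : IndepFun (fun ω => (f ω).im) (fun ω => (g ω).im) P :=
    h.comp Complex.measurable_im Complex.measurable_im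
  have e1 := hirr.integral_mul_eq_mul_integral hfr.1 hgr.1
  have e2 := hiri.integral_mul_eq_mul_integral hfr.1 hgi.1
  have e3 := hiir.integral_mul_eq_mul_integral hfi.1 hgr.1
  have e4 := hiii.integral_mul_eq_mul_integral hfi.1 hgi.1
  have i1 : Integrable ((fun ω => (f ω).re) * fun ω => (g ω).re) P := hirr.integrable_mul hfr hgr
  have i2 : Integrable ((fun ω => (f ω).re) * fun ω => (g ω).im) P := hiri.integrable_mul hfr hgi
  have i3 : Integrable ((fun ω => (f ω).im) * fun ω => (g ω).re) P := hiir.integrable_mul hfi hgr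
  have i4 : Integrable ((fun ω => (f ω).im) * fun ω => (g ω).im) P := hiii.integrable_mul hfi hgi
  have hfg : Integrable (fun ω => f ω * g ω) P := h.integrable_mul hf hg
  have Ifr : ∫ ω, (f ω).re ∂P = (∫ ω, f ω ∂P).re := by simpa using integral_re hf
  have Ifi : ∫ ω, (f ω).im ∂P = (∫ ω, f ω ∂P).im := by simpa using integral_im hf
  have Igr : ∫ ω, (g ω).re ∂P = (∫ ω, g ω ∂P).re := by simpa using integral_re hg
  have Igi : ∫ ω, (g ω).im ∂P = (∫ ω, g ω ∂P).im := by simpa using integral_im hg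
  have Ifgr : ∫ ω, (f ω * g ω).re ∂P = (∫ ω, f ω * g ω ∂P).re := by simpa using integral_re hfg
  have Ifgi : ∫ ω, (f ω * g ω).im ∂P = (∫ ω, f ω * g ω ∂P).im := by simpa using integral_im hfg
  apply Complex.ext
  · rw [← Ifgr]
    have : ∀ ω, (f ω * g ω).re = ((fun ω => (f ω).re) * fun ω => (g ω).re) ω
        - ((fun ω => (f ω).im) * fun ω => (g ω).im) ω := by
      intro ω; simp [Complex.mul_re]
    rw [integral_congr_ae (Filter.Eventually.of_forall this), integral_sub i1 i4, e1, e4,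
      Ifr, Ifi, Igr, Igi, Complex.mul_re]
  · rw [← Ifgi]
    have : ∀ ω, (f ω * g ω).im = ((fun ω => (f ω).re) * fun ω => (g ω).im) ω
        + ((fun ω => (f ω).im) * fun ω => (g ω).re) ω := by
      intro ω; simp [Complex.mul_im]
    rw [integral_congr_ae (Filter.Eventually.of_forall this), integral_add i2 i3, e2, e3,
      Ifr, Ifi, Igr, Igi, Complex.mul_im]
lemma sum_indep_sq {Ω : Type*} [MeasurableSpace Ω] (P : Measure Ω) [IsProbabilityMeasure P]
    {n : ℕ} (S : Fin n → Ω → ℂ) (ρ : ℝ) (hmeas : ∀ k, Measurable (S k))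
    (hindep : iIndepFun S P)
    (hL2 : ∀ k, MemLp (S k) 2 P) (hmean : ∀ k, ∫ ω, S k ω ∂P = 0)
    (hpow : ∀ k, ∫ ω, ‖S k ω‖ ^ 2 ∂P = ρ)
    (t : Finset (Fin n)) (a : Fin n → ℂ) :
    ∫ ω, (‖∑ k ∈ t, a k * S k ω‖) ^ 2 ∂P
      = (∑ k ∈ t, ‖a k‖ ^ 2) * ρ := by
  have hstar : Measurable (star : ℂ → ℂ) := continuous_star.measurable
  have hint1 : ∀ k, Integrable (S k) P := fun k => (hL2 k).integrable one_le_two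
  have hintc : ∀ k, Integrable (fun ω => (starRingEnd ℂ) (S k ω)) P := by
    intro k
    refine ⟨continuous_star.comp_aestronglyMeasurable (hint1 k).1, ?_⟩
    have h2 := (hint1 k).2
    simp only [HasFiniteIntegral, starRingEnd_apply, nnnorm_star] at h2 ⊢
    simpa [enorm_eq_nnnorm, nnnorm_star] using h2
  have hint : ∀ k l, Integrable (fun ω => S k ω * (starRingEnd ℂ) (S l ω)) P := by
    intro k l
    by_cases hkl : k = l
    · subst hkl
      have h1 : Integrable (fun ω => ‖S k ω‖ ^ 2) P :=
        (memLp_two_iff_integrable_sq_norm (hL2 k).aestronglyMeasurable).mp (hL2 k)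
      refine (h1.ofReal.congr ?_)
      filter_upwards with ω
      rw [Complex.mul_conj, Complex.normSq_eq_norm_sq]
      norm_cast
    · have hi : IndepFun (S k) (fun ω => (starRingEnd ℂ) (S l ω)) P := by
        exact (hindep.indepFun hkl).comp measurable_id hstar
      have := hi.integrable_mul (hint1 k) (hintc l)
      exact this
  have cross : ∀ k l, k ≠ l → ∫ ω, S k ω * (starRingEnd ℂ) (S l ω) ∂P = 0 := by
    intro k l hkl
    have hi : IndepFun (S k) (fun ω => (starRingEnd ℂ) (S l ω)) P := by
      exact (hindep.indepFun hkl).comp measurable_id hstar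
    rw [indep_integral_mul hi (hint1 k) (hintc l), hmean k, zero_mul]
  have diag : ∀ k, ∫ ω, S k ω * (starRingEnd ℂ) (S k ω) ∂P = (ρ : ℂ) := by
    intro k
    have : (fun ω => S k ω * (starRingEnd ℂ) (S k ω))
        = fun ω => ((‖S k ω‖ ^ 2 : ℝ) : ℂ) := by
      funext ω
      rw [Complex.mul_conj, Complex.normSq_eq_norm_sq]
    rw [this]
    have hco := integral_ofReal (𝕜 := ℂ) (f := fun ω => ‖S k ω‖ ^ 2) (μ := P)
    simpa [hpow k] using hco
  -- expand the square
  have step1 : ∀ ω : Ω, ((‖∑ k ∈ t, a k * S k ω‖) ^ 2 : ℝ)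
      = (∑ k ∈ t, ∑ l ∈ t, (a k * (starRingEnd ℂ) (a l)) * (S k ω * (starRingEnd ℂ) (S l ω))).re := by
    intro ω
    have h1 : ((‖∑ k ∈ t, a k * S k ω‖) ^ 2 : ℝ)
        = ((∑ k ∈ t, a k * S k ω) * (starRingEnd ℂ) (∑ k ∈ t, a k * S k ω)).re := by
      rw [Complex.mul_conj, Complex.normSq_eq_norm_sq, Complex.ofReal_re]
    rw [h1, map_sum, Finset.sum_mul_sum]
    congr 1
    refine Finset.sum_congr rfl fun k _ => Finset.sum_congr rfl fun l _ => ?_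
    rw [map_mul]
    ring
  rw [integral_congr_ae (Filter.Eventually.of_forall step1)]
  set F : Ω → ℂ := fun ω => ∑ k ∈ t, ∑ l ∈ t,
    (a k * (starRingEnd ℂ) (a l)) * (S k ω * (starRingEnd ℂ) (S l ω)) with hF
  have hFint : Integrable F P :=
    integrable_finset_sum _ fun k _ => integrable_finset_sum _ fun l _ => (hint k l).const_mul _
  have hre : ∫ ω, (F ω).re ∂P = (∫ ω, F ω ∂P).re := by simpa using integral_re hFint
  rw [hre]
  have hIF : ∫ ω, F ω ∂P = ∑ k ∈ t, (a k * (starRingEnd ℂ) (a k)) * (ρ : ℂ) := by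
    rw [hF, integral_finset_sum _ fun k _ => integrable_finset_sum _ fun l _ => (hint k l).const_mul _]
    refine Finset.sum_congr rfl fun k hk => ?_
    rw [integral_finset_sum _ fun l _ => (hint k l).const_mul _]
    rw [Finset.sum_eq_single k]
    · rw [integral_const_mul, diag k]
    · intro l _ hlk
      rw [integral_const_mul, cross k l (Ne.symm hlk), mul_zero]
    · intro hk'; exact absurd hk hk'
  rw [hIF]
  have : ∀ k, (a k * (starRingEnd ℂ) (a k)) * (ρ : ℂ)
      = ((‖a k‖ ^ 2 * ρ : ℝ) : ℂ) := by
    intro k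
    rw [Complex.mul_conj, Complex.normSq_eq_norm_sq]
    push_cast
    ring
  rw [Finset.sum_congr rfl fun k _ => this k, ← Complex.ofReal_sum, Complex.ofReal_re,
    ← Finset.sum_mul]

/-- Power of the ICI term (equation (21)): with i.i.d. zero-mean symbols `S k` of power `ρ`,
unit-modulus phases `d k` and gain `α / N_c`,
`E[|I_c|²] = (N_e/N_c)(1 − N_e/N_c) |α|² ρ` where
`I_c = (α/N_c) ∑_{i=N_e}^{N_c−1} ∑_{k≠p} S_k d_k exp(2πi(k−p)i/N_c)`. -/
theorem stmt_7 {Ω : Type*} [MeasurableSpace Ω] (P : Measure Ω) [IsProbabilityMeasure P]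
    (Nc Ne : ℕ) (hNc : 1 ≤ Nc) (hNe : Ne ≤ Nc) (p : Fin Nc)
    (S : Fin Nc → Ω → ℂ) (ρ : ℝ)
    (hmeas : ∀ k, Measurable (S k))
    (hindep : iIndepFun S P)
    (hL2 : ∀ k, MemLp (S k) 2 P)
    (hmean : ∀ k, ∫ ω, S k ω ∂P = 0)
    (hpow : ∀ k, ∫ ω, ‖S k ω‖ ^ 2 ∂P = ρ)
    (d : Fin Nc → ℂ) (hd : ∀ k, ‖d k‖ = 1) (α : ℂ) :
    (∫ ω, ‖(α / (Nc : ℂ)) * ∑ i ∈ Finset.Ico Ne Nc, ∑ k ∈ Finset.univ.erase p,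
        S k ω * d k * Complex.exp (2 * Real.pi * Complex.I * (((k : ℕ) : ℂ) - (((p : ℕ) : ℂ))) * (i : ℂ) / (Nc : ℂ))‖ ^ 2 ∂P)
      = ((Ne : ℝ) / (Nc : ℝ)) * (1 - (Ne : ℝ) / (Nc : ℝ)) * ‖α‖ ^ 2 * ρ := by
  have hNc0 : (Nc : ℝ) ≠ 0 := Nat.cast_ne_zero.mpr (by omega)
  set c : Fin Nc → ℂ := fun k => ∑ i ∈ Finset.Ico Ne Nc,
    Complex.exp (2 * Real.pi * Complex.I * (((k : ℕ) : ℂ) - (((p : ℕ) : ℂ))) * (i : ℂ) / (Nc : ℂ)) with hc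
  set a : Fin Nc → ℂ := fun k => α / Nc * d k * c k with ha
  have pointwise : ∀ ω : Ω, (α / (Nc : ℂ)) * ∑ i ∈ Finset.Ico Ne Nc, ∑ k ∈ Finset.univ.erase p,
      S k ω * d k * Complex.exp (2 * Real.pi * Complex.I * (((k : ℕ) : ℂ) - (((p : ℕ) : ℂ))) * (i : ℂ) / (Nc : ℂ))
      = ∑ k ∈ Finset.univ.erase p, a k * S k ω := by
    intro ω
    rw [Finset.sum_comm, Finset.mul_sum]
    refine Finset.sum_congr rfl fun k _ => ?_
    rw [ha, hc]
    simp only [Finset.mul_sum, Finset.sum_mul]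
    exact Finset.sum_congr rfl fun i _ => by ring
  have hint := integral_congr_ae (μ := P)
    (Filter.Eventually.of_forall fun ω => by dsimp only; rw [pointwise ω] :
      (fun ω => (‖(α / (Nc : ℂ)) * ∑ i ∈ Finset.Ico Ne Nc, ∑ k ∈ Finset.univ.erase p,
        S k ω * d k * Complex.exp (2 * Real.pi * Complex.I * (((k : ℕ) : ℂ) - (((p : ℕ) : ℂ))) * (i : ℂ) / (Nc : ℂ))‖) ^ 2)
      =ᵐ[P] fun ω => (‖∑ k ∈ Finset.univ.erase p, a k * S k ω‖) ^ 2)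
  rw [hint, sum_indep_sq P S ρ hmeas hindep hL2 hmean hpow _ a]
  have habs : ∀ k, ‖a k‖ ^ 2 = ‖α‖ ^ 2 / (Nc : ℝ) ^ 2 * ‖c k‖ ^ 2 := by
    intro k
    rw [ha]
    simp only [norm_mul, norm_div, hd, Complex.norm_natCast]
    ring
  rw [Finset.sum_congr rfl fun k _ => habs k, ← Finset.mul_sum, parseval Nc Ne hNc hNe p]
  field_simp
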